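/- arXiv:1202.0175 — 4 statements merged into one kernel-verified Lean document; each statement's English description precedes it below -/
import Mathlib

section
/- The scaling property P_t(αK | αS) = α·P_t(K | S) for all α > 0, K > 0, S > 0 holds if and only if the return S_{t+1}/S_t is independent of S_t, i.e., the conditional law of S_{t+1}/S_t given S_t = s does not depend on s. -/
open MeasureTheory


lemma put_integrable {μ : Measure ℝ} [IsProbabilityMeasure μ]
    (h : Integrable (fun y => y) μ) (K : ℝ) :
    Integrable (fun y => max (K - y) 0) μ := by
  have h1 : Integrable (fun y => K - y) μ := (integrable_const K).sub h
  simpa [Pi.sup_def, max_comm] using h1.sup (integrable_zero ℝ ℝ μ)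

/-- Put prices for all strikes `K > 0` determine a probability measure supported on `(0,∞)`. -/
lemma put_determines {μ ν : Measure ℝ} [IsProbabilityMeasure μ] [IsProbabilityMeasure ν]
    (hμ0 : μ (Set.Iic 0) = 0) (hν0 : ν (Set.Iic 0) = 0)
    (hμi : Integrable (fun y => y) μ) (hνi : Integrable (fun y => y) ν)
    (h : ∀ K, 0 < K → ∫ y, max (K - y) 0 ∂μ = ∫ y, max (K - y) 0 ∂ν) : μ = ν := by
  refine Measure.ext_of_Iic μ ν (fun a => ?_)
  rcases le_or_gt a 0 with ha | ha
  · rw [show μ (Set.Iic a) = 0 from measure_mono_null (Set.Iic_subset_Iic.2 ha) hμ0,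
      show ν (Set.Iic a) = 0 from measure_mono_null (Set.Iic_subset_Iic.2 ha) hν0]
  -- a > 0 : recover the CDF from put prices via difference quotients
  set F : ℕ → ℝ → ℝ := fun n y =>
    ((n : ℝ) + 1) * (max (a + ((n : ℝ) + 1)⁻¹ - y) 0 - max (a - y) 0) with hF
  have hn : ∀ n : ℕ, (0:ℝ) < (n : ℝ) + 1 := fun n => by positivity
  -- pointwise limit
  have hlim : ∀ y : ℝ, Filter.Tendsto (fun n => F n y) Filter.atTop
      (nhds (Set.indicator (Set.Iic a) (fun _ => (1:ℝ)) y)) := by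
    intro y
    rcases le_or_gt y a with hy | hy
    · have : ∀ n, F n y = 1 := by
        intro n
        have h1 : (0:ℝ) ≤ a + ((n : ℝ) + 1)⁻¹ - y := by
          have := (hn n); nlinarith [inv_pos.2 (hn n)]
        have h2 : (0:ℝ) ≤ a - y := by linarith
        simp only [hF, max_eq_left h1, max_eq_left h2]
        rw [show a + ((n : ℝ) + 1)⁻¹ - y - (a - y) = ((n : ℝ) + 1)⁻¹ by ring]
        exact mul_inv_cancel₀ (hn n).ne'
      simp only [this, Set.indicator_of_mem (Set.mem_Iic.2 hy)]
      exact tendsto_const_nhds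
    · have : ∀ᶠ n in Filter.atTop, F n y = 0 := by
        obtain ⟨N, hN⟩ := exists_nat_gt (y - a)⁻¹
        refine Filter.eventually_atTop.2 ⟨N, fun n hnN => ?_⟩
        have hya : (0:ℝ) < y - a := by linarith
        have h3 : ((n : ℝ) + 1)⁻¹ < y - a := by
          rw [inv_lt_comm₀ (hn n) hya]
          calc (y - a)⁻¹ < N := hN
            _ ≤ (n : ℝ) + 1 := by exact_mod_cast Nat.le_succ_of_le hnN
        have h1 : a + ((n : ℝ) + 1)⁻¹ - y ≤ 0 := by linarith
        have h2 : a - y ≤ 0 := by linarith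
        simp [hF, max_eq_right h1, max_eq_right h2]
      have : Filter.Tendsto (fun n => F n y) Filter.atTop (nhds 0) :=
        Filter.Tendsto.congr' (this.mono fun n hn => hn.symm) tendsto_const_nhds
      simpa [Set.indicator_of_notMem (fun hc => absurd (Set.mem_Iic.1 hc) (not_le.2 hy))] using this
  -- DCT for a fixed measure
  have key : ∀ (ρ : Measure ℝ), IsProbabilityMeasure ρ → Integrable (fun y => y) ρ →
      Filter.Tendsto (fun n => ∫ y, F n y ∂ρ) Filter.atTop (nhds ((ρ (Set.Iic a)).toReal)) := by
    intro ρ hρ hρi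
    have hmeas : ∀ n, AEStronglyMeasurable (F n) ρ := by
      intro n
      apply Continuous.aestronglyMeasurable
      fun_prop
    have hbound : ∀ n, ∀ᵐ y ∂ρ, ‖F n y‖ ≤ (1:ℝ) := by
      intro n
      refine Filter.Eventually.of_forall fun y => ?_
      have lip : |max (a + ((n : ℝ) + 1)⁻¹ - y) 0 - max (a - y) 0| ≤ ((n : ℝ) + 1)⁻¹ := by
        have := abs_max_sub_max_le_abs (a + ((n : ℝ) + 1)⁻¹ - y) (a - y) 0
        have h4 : |a + ((n : ℝ) + 1)⁻¹ - y - (a - y)| = ((n : ℝ) + 1)⁻¹ := by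
          rw [show a + ((n : ℝ) + 1)⁻¹ - y - (a - y) = ((n : ℝ) + 1)⁻¹ by ring,
            abs_of_pos (inv_pos.2 (hn n))]
        linarith [h4 ▸ this]
      have : ‖F n y‖ = ((n : ℝ) + 1) * |max (a + ((n : ℝ) + 1)⁻¹ - y) 0 - max (a - y) 0| := by
        rw [hF]; rw [Real.norm_eq_abs, abs_mul, abs_of_pos (hn n)]
      rw [this]
      calc ((n : ℝ) + 1) * |max (a + ((n : ℝ) + 1)⁻¹ - y) 0 - max (a - y) 0|
          ≤ ((n : ℝ) + 1) * ((n : ℝ) + 1)⁻¹ := by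
            exact mul_le_mul_of_nonneg_left lip (hn n).le
        _ = 1 := mul_inv_cancel₀ (hn n).ne'
    have := tendsto_integral_of_dominated_convergence (fun _ => (1:ℝ)) hmeas
      (integrable_const 1) hbound (Filter.Eventually.of_forall hlim)
    have heq : ∫ y, Set.indicator (Set.Iic a) (fun _ => (1:ℝ)) y ∂ρ = (ρ (Set.Iic a)).toReal := by
      rw [integral_indicator_const (1:ℝ) measurableSet_Iic]; simp [Measure.real]
    rwa [heq] at this
  have hμν : ∀ n : ℕ, ∫ y, F n y ∂μ = ∫ y, F n y ∂ν := by
    intro n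
    have hpos : (0:ℝ) < a + ((n : ℝ) + 1)⁻¹ := by positivity
    simp only [hF]
    rw [integral_const_mul, integral_const_mul,
      integral_sub (put_integrable hμi _) (put_integrable hμi _),
      integral_sub (put_integrable hνi _) (put_integrable hνi _),
      h _ hpos, h _ ha]
  have t1 := key μ ‹_› hμi
  have t2 := key ν ‹_› hνi
  rw [Filter.tendsto_congr hμν] at t1
  have := tendsto_nhds_unique t1 t2
  exact (ENNReal.toReal_eq_toReal_iff' (measure_ne_top μ _) (measure_ne_top ν _)).1 this

/-- The put-price scaling property `P (α K | α s) = α · P (K | s)`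
(for all `α, K, s > 0`) holds if and only if the return `S_{t+1} / S_t` is
independent of `S_t`, i.e. the conditional law of `S_{t+1} / S_t` given
`S_t = s` does not depend on `s`.  Here `κ s` denotes the regular conditional
distribution of `S_{t+1}` given `S_t = s` and
`P K s = ∫ y, (K - y)⁺ ∂(κ s)`. -/
theorem scaling_iff_independent_returns
    (κ : ℝ → Measure ℝ) (hκprob : ∀ s > 0, IsProbabilityMeasure (κ s))
    (hκpos : ∀ s > 0, (κ s) (Set.Iic 0) = 0)
    (hκmeas : ∀ s > 0, Measurable fun y : ℝ => y / s)
    (hint : ∀ s > 0, Integrable (fun y => y) (κ s))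
    (P : ℝ → ℝ → ℝ)
    (hP : ∀ K s, 0 < s → P K s = ∫ y, max (K - y) 0 ∂(κ s)) :
    (∀ α K s, 0 < α → 0 < K → 0 < s → P (α * K) (α * s) = α * P K s) ↔
      (∀ s s', 0 < s → 0 < s' →
        Measure.map (fun y => y / s) (κ s) = Measure.map (fun y => y / s') (κ s')) := by
  -- general facts about the return measure `map (·/s) (κ s)`
  have hprob : ∀ s, 0 < s → IsProbabilityMeasure (Measure.map (fun y => y / s) (κ s)) := by
    intro s hs
    have := hκprob s hs
    exact Measure.isProbabilityMeasure_map (hκmeas s hs).aemeasurable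
  have hzero : ∀ s, 0 < s → (Measure.map (fun y => y / s) (κ s)) (Set.Iic 0) = 0 := by
    intro s hs
    rw [Measure.map_apply (hκmeas s hs) measurableSet_Iic]
    have : (fun y : ℝ => y / s) ⁻¹' Set.Iic 0 = Set.Iic 0 := by
      ext y; simp [div_le_iff₀ hs]
    rw [this]; exact hκpos s hs
  have hinteg : ∀ s, 0 < s → Integrable (fun y => y) (Measure.map (fun y => y / s) (κ s)) := by
    intro s hs
    refine (integrable_map_measure ?_ (hκmeas s hs).aemeasurable).2 ?_
    · exact aestronglyMeasurable_id
    · exact (hint s hs).div_const s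
  have hput : ∀ s, 0 < s → ∀ K : ℝ,
      ∫ z, max (K - z) 0 ∂(Measure.map (fun y => y / s) (κ s)) =
        (∫ y, max (K * s - y) 0 ∂(κ s)) / s := by
    intro s hs K
    rw [integral_map (hκmeas s hs).aemeasurable
      (Continuous.aestronglyMeasurable (by fun_prop))]
    rw [← integral_div]
    refine integral_congr_ae (Filter.Eventually.of_forall fun y => ?_)
    show max (K - y / s) 0 = max (K * s - y) 0 / s
    rw [← max_div_div_right hs.le, zero_div]
    congr 1
    rw [sub_div, mul_div_cancel_right₀ _ hs.ne']
  constructor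
  · intro hscale s s' hs hs'
    have := hκprob s hs; have := hκprob s' hs'
    have := hprob s hs; have := hprob s' hs'
    refine put_determines (hzero s hs) (hzero s' hs') (hinteg s hs) (hinteg s' hs') ?_
    intro K hK
    rw [hput s hs K, hput s' hs' K, ← hP _ _ hs, ← hP _ _ hs']
    have h1 := hscale (s' / s) (K * s) s (by positivity) (by positivity) hs
    rw [show s' / s * (K * s) = K * s' by field_simp, show s' / s * s = s' by field_simp] at h1
    rw [h1]
    field_simp
  · intro hmap α K s hα hK hs
    have := hκprob s hs; have := hκprob (α * s) (by positivity)
    rw [hP _ _ (by positivity : (0:ℝ) < α * s), hP _ _ hs]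
    have e1 : ∀ y : ℝ, max (α * K - y) 0 = α * max (K - y / (α * s) * s) 0 := by
      intro y
      rw [mul_max_of_nonneg _ _ hα.le, mul_zero]
      congr 1
      field_simp
    calc ∫ y, max (α * K - y) 0 ∂(κ (α * s))
        = ∫ y, α * max (K - y / (α * s) * s) 0 ∂(κ (α * s)) := by
          exact integral_congr_ae (Filter.Eventually.of_forall fun y => e1 y)
      _ = α * ∫ y, max (K - y / (α * s) * s) 0 ∂(κ (α * s)) := integral_const_mul _ _
      _ = α * ∫ z, max (K - z * s) 0 ∂(Measure.map (fun y => y / (α * s)) (κ (α * s))) := by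
          rw [integral_map (hκmeas _ (by positivity)).aemeasurable
            (Continuous.aestronglyMeasurable (by fun_prop))]
      _ = α * ∫ z, max (K - z * s) 0 ∂(Measure.map (fun y => y / s) (κ s)) := by
          rw [hmap (α * s) s (by positivity) hs]
      _ = α * ∫ y, max (K - y / s * s) 0 ∂(κ s) := by
          rw [integral_map (hκmeas s hs).aemeasurable
            (Continuous.aestronglyMeasurable (by fun_prop))]
      _ = α * ∫ y, max (K - y) 0 ∂(κ s) := by
          congr 1
          refine integral_congr_ae (Filter.Eventually.of_forall fun y => ?_)
          show max (K - y / s * s) 0 = max (K - y) 0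
          rw [div_mul_cancel₀ _ hs.ne']
end

section
/- If S satisfies the scaling property (independent returns), the log-return density of the reverse Γ-adjoint process S̃ satisfies Q̃(ln(S̃_{t'}/S̃_t) ∈ ξ + dξ) = e^{−ξ} · Q(ln(S_{N−t'}·S_{N−t}^{-1})^{-1} ∈ ξ + dξ); i.e., the density f̃ of ln(S̃_{t'}/S̃_t) equals f̃(ξ) = e^{−ξ} f(−ξ), where f is the density of ln(S_{N−t}/S_{N−t'})... equivalently of the reversed-time log return negated. -/
open MeasureTheory Real Set Filter

lemma hasDerivAt_integral_Iic (h : ℝ → ℝ) (hc : Continuous h)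
    (hi : MeasureTheory.Integrable h) (x : ℝ) :
    HasDerivAt (fun y => ∫ t in Set.Iic y, h t) (h x) x := by
  have key : (fun y => ∫ t in Set.Iic y, h t)
      = fun y => (∫ t in Set.Iic (0:ℝ), h t) + ∫ t in (0:ℝ)..y, h t := by
    funext y
    rw [← intervalIntegral.integral_Iic_sub_Iic hi.integrableOn hi.integrableOn]
    ring
  rw [key]
  exact (intervalIntegral.integral_hasDerivAt_right
    (hi.intervalIntegrable)
    (hc.stronglyMeasurableAtFilter _ _) hc.continuousAt).const_add _


/-- Under the scaling property (independent returns), the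
log-return density of the reverse Γ-adjoint process satisfies
`f̃(ξ) = e^{-ξ} · f(-ξ)`, where `f` is the density of the log-return
`ln (S_{N-t} / S_{N-t'})` of the original process over the reversed time
interval.  Here `P K s = ∫ (K - s e^η)⁺ f η dη` is the put price over that
period, `Γ K s = ∂_s² P K s` its gamma, and the adjoint transition density
from spot `1` is `k' ↦ Γ 1 k'`, so the adjoint log-return density is
`f̃(ξ) = e^ξ · Γ 1 (e^ξ)`. -/
theorem reverse_gamma_adjoint_log_return_density
    (f : ℝ → ℝ)                       -- density of `ln (S_{N-t} / S_{N-t'})`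
    (hf : Continuous f) (hfpos : ∀ η, 0 ≤ f η)
    (hfint : ∫ η, f η = 1)
    (hfmart : ∫ η, Real.exp η * f η = 1)   -- zero rates: `E[S_{N-t}/S_{N-t'}] = 1`
    (P : ℝ → ℝ → ℝ)
    (hP : ∀ K s, 0 < K → 0 < s →
      P K s = ∫ η, max (K - s * Real.exp η) 0 * f η)
    (Γ : ℝ → ℝ → ℝ)
    (hΓ : ∀ K s, Γ K s = iteratedDeriv 2 (fun x => P K x) s) :
    ∀ ξ : ℝ,
      Real.exp ξ * Γ 1 (Real.exp ξ) = Real.exp (-ξ) * f (-ξ) := by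
  intro ξ
  -- integrability
  have hfi : Integrable f := by
    by_contra h
    rw [MeasureTheory.integral_undef h] at hfint; norm_num at hfint
  have hgc : Continuous (fun η => Real.exp η * f η) := Real.continuous_exp.mul hf
  have hgi : Integrable (fun η => Real.exp η * f η) := by
    by_contra h
    rw [MeasureTheory.integral_undef h] at hfmart; norm_num at hfmart
  set F : ℝ → ℝ := fun x => ∫ t in Set.Iic x, Real.exp t * f t with hFdef
  set G : ℝ → ℝ := fun x => ∫ t in Set.Iic x, f t with hGdef
  have hF : ∀ x, HasDerivAt F (Real.exp x * f x) x :=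
    fun x => hasDerivAt_integral_Iic _ hgc hgi x
  have hG : ∀ x, HasDerivAt G (f x) x :=
    fun x => hasDerivAt_integral_Iic _ hf hfi x
  set g : ℝ → ℝ := fun s => G (-Real.log s) - s * F (-Real.log s) with hgdef
  -- Step A : P 1 s = g s for s > 0
  have stepA : ∀ s : ℝ, 0 < s → P 1 s = g s := by
    intro s hs
    rw [hP 1 s one_pos hs]
    have hind : (fun η => max (1 - s * Real.exp η) 0 * f η)
        = Set.indicator (Set.Iic (-Real.log s)) (fun η => (1 - s * Real.exp η) * f η) := by
      funext η
      by_cases hη : η ≤ -Real.log s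
      · rw [Set.indicator_of_mem (Set.mem_Iic.2 hη)]
        congr 1
        rw [max_eq_left]
        have : Real.exp η ≤ Real.exp (-Real.log s) := Real.exp_le_exp.2 hη
        rw [Real.exp_neg, Real.exp_log hs] at this
        have : s * Real.exp η ≤ s * s⁻¹ := by
          exact mul_le_mul_of_nonneg_left this hs.le
        rw [mul_inv_cancel₀ hs.ne'] at this
        linarith
      · rw [Set.indicator_of_notMem (by simpa using hη)]
        push_neg at hη
        have : Real.exp (-Real.log s) < Real.exp η := Real.exp_lt_exp.2 hη
        rw [Real.exp_neg, Real.exp_log hs] at this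
        have h1 : s * s⁻¹ < s * Real.exp η := by
          exact mul_lt_mul_of_pos_left this hs
        rw [mul_inv_cancel₀ hs.ne'] at h1
        have : max (1 - s * Real.exp η) 0 = 0 := max_eq_right (by linarith)
        rw [this, zero_mul]
    rw [hind, MeasureTheory.integral_indicator measurableSet_Iic]
    have hsub : ∀ η, (1 - s * Real.exp η) * f η = f η - s * (Real.exp η * f η) := by
      intro η; ring
    simp only [hsub]
    rw [MeasureTheory.integral_sub hfi.integrableOn ((hgi.integrableOn).const_mul s),
      MeasureTheory.integral_const_mul]
  -- Step B : derivative of g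
  have stepB : ∀ s : ℝ, 0 < s → HasDerivAt g (-F (-Real.log s)) s := by
    intro s hs
    have hlog : HasDerivAt (fun x : ℝ => -Real.log x) (-(s⁻¹)) s :=
      (Real.hasDerivAt_log hs.ne').neg
    have h1 : HasDerivAt (fun x => G (-Real.log x)) (f (-Real.log s) * -(s⁻¹)) s :=
      (hG (-Real.log s)).comp (h := fun x : ℝ => -Real.log x) s hlog
    have h2 : HasDerivAt (fun x => F (-Real.log x))
        ((Real.exp (-Real.log s) * f (-Real.log s)) * -(s⁻¹)) s :=
      (hF (-Real.log s)).comp (h := fun x : ℝ => -Real.log x) s hlog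
    have h3 : HasDerivAt (fun x => x * F (-Real.log x))
        (1 * F (-Real.log s) + s * ((Real.exp (-Real.log s) * f (-Real.log s)) * -(s⁻¹))) s :=
      (hasDerivAt_id s).mul h2
    have h4 := h1.sub h3
    convert h4 using 1
    · rfl
    · rfl
    · rfl
    rw [Real.exp_neg, Real.exp_log hs]
    field_simp
    ring
  -- Step C : second derivative
  have stepC : ∀ s : ℝ, 0 < s →
      HasDerivAt (fun x => -F (-Real.log x)) (f (-Real.log s) / s ^ 2) s := by
    intro s hs
    have hlog : HasDerivAt (fun x : ℝ => -Real.log x) (-(s⁻¹)) s :=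
      (Real.hasDerivAt_log hs.ne').neg
    have h2 : HasDerivAt (fun x => F (-Real.log x))
        ((Real.exp (-Real.log s) * f (-Real.log s)) * -(s⁻¹)) s :=
      (hF (-Real.log s)).comp (h := fun x : ℝ => -Real.log x) s hlog
    convert h2.neg using 1
    · rfl
    · rfl
    · rfl
    rw [Real.exp_neg, Real.exp_log hs]
    rw [div_eq_iff (by positivity : (s:ℝ)^2 ≠ 0)]
    field_simp
  -- Step D
  set c := Real.exp ξ with hcdef
  have hc : 0 < c := Real.exp_pos ξ
  have hev : ∀ᶠ s in nhds c, 0 < s := eventually_gt_nhds hc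
  have heq : (fun s => P 1 s) =ᶠ[nhds c] g := hev.mono fun s hs => stepA s hs
  have hderiv_eq : deriv (fun s => P 1 s) =ᶠ[nhds c] (fun s => -F (-Real.log s)) := by
    filter_upwards [heq.eventuallyEq_nhds, hev] with s hs hspos
    rw [Filter.EventuallyEq.deriv_eq hs, (stepB s hspos).deriv]
  have h2d : deriv (deriv (fun s => P 1 s)) c = f (-Real.log c) / c ^ 2 := by
    rw [hderiv_eq.deriv_eq, (stepC c hc).deriv]
  have hit : iteratedDeriv 2 (fun x => P 1 x) c = f (-Real.log c) / c ^ 2 := by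
    rw [show (2:ℕ) = 1 + 1 from rfl, iteratedDeriv_succ, iteratedDeriv_one]
    exact h2d
  rw [hΓ, hit, hcdef, Real.log_exp, Real.exp_neg]
  rw [eq_comm, inv_mul_eq_div]
  field_simp
end

section
/- If the law of ln S_t is symmetric (Put-Call-Symmetry: C_t(K|S_t)/√K = P_t(K'|S_t)/√K' whenever K·K' = S_t²), and S satisfies the scaling property, then P_t(K|S_t) + S_t − K = P_t(S_t | K); differentiating twice in S_t yields Γ_t(k'|k) = ∂_K² P_t(k|k'), so the transition density of S satisfies Q(S_{t+1} ∈ dk' | S_t = k) = Γ_t(k | k') dk'. Consequently a process with Put-Call-Symmetry and independent stationary returns is its own reverse Γ-adjoint. -/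
open MeasureTheory

/-- Under Put-Call-Symmetry (`C(K|s)/√K = P(K'|s)/√K'` whenever
`K·K' = s²`), the scaling property, and put-call parity, one has
`P(K|s) + s - K = P(s|K)`; differentiating twice in the spot yields
`Γ(k'|k) = ∂_K² P(k|k')`, and consequently the transition density of `S`
satisfies `Q(S_{t+1} ∈ dk' | S_t = k) = Γ(k|k') dk'`: a process with
Put-Call-Symmetry and independent returns is its own reverse Γ-adjoint. -/
theorem put_call_symmetry_self_adjoint
    (κ : ℝ → Measure ℝ) (hκprob : ∀ s > 0, IsProbabilityMeasure (κ s))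
    (hκpos : ∀ s > 0, (κ s) (Set.Iic 0) = 0)
    (q : ℝ → ℝ → ℝ)                      -- `q k` = transition density from spot `k`
    (hκdens : ∀ k > 0, κ k
      = (volume.restrict (Set.Ioi (0:ℝ))).withDensity fun k' => ENNReal.ofReal (q k k'))
    (P C : ℝ → ℝ → ℝ)
    (hP : ∀ K s, 0 < s → P K s = ∫ y, max (K - y) 0 ∂(κ s))
    (hC : ∀ K s, 0 < s → C K s = ∫ y, max (y - K) 0 ∂(κ s))
    (hparity : ∀ K s, 0 < K → 0 < s → C K s = P K s + s - K)
    (hscal : ∀ α K s, 0 < α → 0 < K → 0 < s → P (α * K) (α * s) = α * P K s)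
    (hPCS : ∀ K K' s, 0 < K → 0 < K' → 0 < s → K * K' = s ^ 2 →
      C K s / Real.sqrt K = P K' s / Real.sqrt K')
    (hsmooth : ∀ K > 0, ContDiffOn ℝ 2 (fun s => P K s) (Set.Ioi 0))
    (hsmooth' : ∀ s > 0, ContDiffOn ℝ 2 (fun K => P K s) (Set.Ioi 0))
    -- Breeden–Litzenberger: the transition density is the strike gamma
    (hBL : ∀ k > 0, ∀ k' > 0, q k k' = iteratedDeriv 2 (fun K => P K k) k') :
    (∀ K s, 0 < K → 0 < s → P K s + s - K = P s K) ∧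
    (∀ k k', 0 < k → 0 < k' →
      iteratedDeriv 2 (fun s => P k' s) k = iteratedDeriv 2 (fun K => P K k') k) ∧
    (∀ k k', 0 < k → 0 < k' →
      q k k' = iteratedDeriv 2 (fun s => P k s) k') := by

  have key : ∀ K s, 0 < K → 0 < s → P K s + s - K = P s K := by
    intro K s hK hs
    have hK' : (0:ℝ) < s ^ 2 / K := by positivity
    have hPCS' := hPCS K (s ^ 2 / K) s hK hK' hs (by field_simp)
    have hscal' := hscal (s / K) s K (by positivity) hs hK
    have h1 : s / K * s = s ^ 2 / K := by ring
    have h2 : s / K * K = s := by field_simp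
    rw [h1, h2] at hscal'
    have hsq : Real.sqrt (s ^ 2 / K) = s / Real.sqrt K := by
      rw [Real.sqrt_div (by positivity), Real.sqrt_sq hs.le]
    rw [hscal', hsq] at hPCS'
    have h3 : Real.sqrt K ≠ 0 := ne_of_gt (Real.sqrt_pos.mpr hK)
    have h4 : Real.sqrt K ^ 2 = K := Real.sq_sqrt hK.le
    have hCeq : C K s = P s K := by
      field_simp at hPCS'
      have h5 : Real.sqrt K * Real.sqrt K = K := Real.mul_self_sqrt hK.le
      have h6 : C K s * (K * s) = P s K * (K * s) := by
        rw [← mul_assoc, hPCS', h4]; ring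
      exact mul_right_cancel₀ (by positivity) h6
    have := hparity K s hK hs
    linarith
  refine ⟨key, ?_, ?_⟩
  · intro k k' hk hk'
    have hdiff : DifferentiableOn ℝ (fun K => P K k') (Set.Ioi 0) :=
      (hsmooth' k' hk').differentiableOn (by norm_num)
    have hev1 : ∀ s ∈ Set.Ioi (0:ℝ),
        deriv (fun s => P k' s) s = deriv (fun u => P u k') s - 1 := by
      intro s hs
      have hEv : (fun s => P k' s) =ᶠ[nhds s] (fun u => P u k' - u + k') := by
        filter_upwards [Ioi_mem_nhds hs] with u hu
        have := key k' u hk' hu; linarith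
      rw [hEv.deriv_eq]
      have hd : DifferentiableAt ℝ (fun u => P u k') s :=
        hdiff.differentiableAt (Ioi_mem_nhds hs)
      rw [deriv_add_const, deriv_fun_sub hd differentiableAt_fun_id, deriv_id'']
    have h2eq : ∀ f : ℝ → ℝ, iteratedDeriv 2 f = deriv (deriv f) := by
      intro f
      show iteratedDeriv (1 + 1) f = _
      rw [iteratedDeriv_succ, iteratedDeriv_one]
    rw [h2eq, h2eq]
    have hEv2 : deriv (fun s => P k' s) =ᶠ[nhds k] (fun s => deriv (fun u => P u k') s - 1) := by
      filter_upwards [Ioi_mem_nhds hk] with s hs using hev1 s hs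
    rw [hEv2.deriv_eq, deriv_sub_const]
  · intro k k' hk hk'
    rw [hBL k hk k' hk']
    have hdiff : DifferentiableOn ℝ (fun K => P K k) (Set.Ioi 0) :=
      (hsmooth' k hk).differentiableOn (by norm_num)
    have hev1 : ∀ s ∈ Set.Ioi (0:ℝ),
        deriv (fun s => P k s) s = deriv (fun u => P u k) s - 1 := by
      intro s hs
      have hEv : (fun s => P k s) =ᶠ[nhds s] (fun u => P u k - u + k) := by
        filter_upwards [Ioi_mem_nhds hs] with u hu
        have := key k u hk hu; linarith
      rw [hEv.deriv_eq]
      have hd : DifferentiableAt ℝ (fun u => P u k) s :=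
        hdiff.differentiableAt (Ioi_mem_nhds hs)
      rw [deriv_add_const, deriv_fun_sub hd differentiableAt_fun_id, deriv_id'']
    have h2eq : ∀ f : ℝ → ℝ, iteratedDeriv 2 f = deriv (deriv f) := by
      intro f
      show iteratedDeriv (1 + 1) f = _
      rw [iteratedDeriv_succ, iteratedDeriv_one]
    rw [h2eq, h2eq]
    have hEv2 : deriv (fun s => P k s) =ᶠ[nhds k'] (fun s => deriv (fun u => P u k) s - 1) := by
      filter_upwards [Ioi_mem_nhds hk'] with s hs using hev1 s hs
    rw [hEv2.deriv_eq, deriv_sub_const]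
end

section
/- In the two-period case, the hedging cost function V_1(S_1) defined piecewise as V_1(S_1) = 2w − ζ_0 S_1 for 0 ≤ S_1 ≤ w/ζ_0 and V_1(S_1) = (ζ_0 − w/S_1)·P_1(w/(ζ_0 − w/S_1) | S_1) for S_1 > w/ζ_0 is continuous at S_1 = w/ζ_0, with both one-sided limits equal to w, and its derivative is continuous there with both one-sided limits equal to −ζ_0. -/
open MeasureTheory Filter Topology

set_option maxHeartbeats 1000000

namespace TwoPeriodAux

variable {μ : Measure ℝ} [IsProbabilityMeasure μ]

lemma int_put (h : Integrable (fun y => y) μ) (k : ℝ) :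
    Integrable (fun y => max (k - y) 0) μ :=
  ((integrable_const k).sub h).pos_part

lemma int_call (h : Integrable (fun y => y) μ) (k : ℝ) :
    Integrable (fun y => max (y - k) 0) μ :=
  (h.sub (integrable_const k)).pos_part

/-- put-call parity -/
lemma put_call (h : Integrable (fun y => y) μ) (k : ℝ) :
    ∫ y, max (k - y) 0 ∂μ = k - (∫ y, y ∂μ) + ∫ y, max (y - k) 0 ∂μ := by
  have : ∀ y : ℝ, max (k - y) 0 = (k - y) + max (y - k) 0 := by
    intro y
    rcases le_total y k with hy | hy
    · rw [max_eq_left (by linarith), max_eq_right (by linarith)]; ring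
    · rw [max_eq_right (by linarith), max_eq_left (by linarith)]; ring
  simp_rw [this]
  have h1 : Integrable (fun y : ℝ => k - y) μ := (integrable_const k).sub h
  rw [integral_add h1 (int_call h k), integral_sub (integrable_const k) h, integral_const]
  simp

lemma call_nonneg (k : ℝ) : 0 ≤ ∫ y, max (y - k) 0 ∂μ :=
  integral_nonneg fun y => le_max_right _ _

lemma call_anti (h : Integrable (fun y => y) μ) {k1 k2 : ℝ} (hk : k1 ≤ k2) :
    ∫ y, max (y - k2) 0 ∂μ ≤ ∫ y, max (y - k1) 0 ∂μ :=
  integral_mono (int_call h k2) (int_call h k1)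
    (fun y => max_le_max (by linarith) le_rfl)

/-- dominated convergence: the call price tends to 0 as the strike tends to `∞`. -/
lemma call_tendsto_zero (h : Integrable (fun y => y) μ) :
    Tendsto (fun k => ∫ y, max (y - k) 0 ∂μ) atTop (𝓝 0) := by
  have H : Tendsto (fun k => ∫ y, max (y - k) 0 ∂μ) atTop (𝓝 (∫ y, (0:ℝ) ∂μ)) := by
    apply tendsto_integral_filter_of_dominated_convergence (fun y => |y|)
    · exact Eventually.of_forall fun k =>
        ((aestronglyMeasurable_id.sub aestronglyMeasurable_const).sup
          aestronglyMeasurable_const)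
    · filter_upwards [eventually_ge_atTop (0:ℝ)] with k hk
      refine Eventually.of_forall fun y => ?_
      rw [Real.norm_eq_abs, abs_of_nonneg (le_max_right _ _)]
      rcases le_total y k with hy | hy
      · calc max (y - k) 0 = 0 := max_eq_right (by linarith)
          _ ≤ |y| := abs_nonneg y
      · calc max (y - k) 0 ≤ max y 0 := max_le_max (by linarith) le_rfl
          _ ≤ |y| := max_le (le_abs_self y) (abs_nonneg y)
    · exact h.abs
    · refine Eventually.of_forall fun y => ?_
      apply Tendsto.congr' (f₁ := fun _ => (0:ℝ)) _ tendsto_const_nhds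
      filter_upwards [eventually_ge_atTop y] with k hk
      exact (max_eq_right (by linarith)).symm
  simpa using H

/-- the call price dominates `(k/2) · μ(Ioi k)`. -/
lemma call_ge_tail (h : Integrable (fun y => y) μ) {k : ℝ} (hk : 0 ≤ k) :
    (μ (Set.Ioi k)).toReal * (k / 2) ≤ ∫ y, max (y - k / 2) 0 ∂μ := by
  have hi := integral_indicator_const (μ := μ) (k/2) measurableSet_Ioi (s := Set.Ioi k)
  rw [smul_eq_mul, measureReal_def] at hi
  rw [← hi]
  apply integral_mono ((integrable_const (k/2)).indicator measurableSet_Ioi) (int_call h _)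
  intro y
  by_cases hy : y ∈ Set.Ioi k
  · rw [Set.indicator_of_mem hy]
    simp only [Set.mem_Ioi] at hy
    exact le_max_of_le_left (by linarith)
  · rw [Set.indicator_of_notMem hy]
    exact le_max_right _ _

lemma convex_put (h : Integrable (fun y => y) μ) :
    ConvexOn ℝ Set.univ (fun k => ∫ y, max (k - y) 0 ∂μ) := by
  refine ⟨convex_univ, fun a _ b _ p q hp hq hpq => ?_⟩
  simp only [smul_eq_mul]
  have hpt : ∀ y : ℝ, max ((p*a + q*b) - y) 0 ≤ p * max (a - y) 0 + q * max (b - y) 0 := by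
    intro y
    have h1 : (p*a + q*b) - y = p*(a-y) + q*(b-y) := by linear_combination y * hpq
    rw [h1, mul_max_of_nonneg _ _ hp, mul_max_of_nonneg _ _ hq, mul_zero, mul_zero]
    exact max_le (add_le_add (le_max_left _ _) (le_max_left _ _))
      (add_nonneg (le_max_right _ _) (le_max_right _ _))
  calc (∫ y, max ((p*a + q*b) - y) 0 ∂μ)
      ≤ ∫ y, (p * max (a - y) 0 + q * max (b - y) 0) ∂μ :=
        integral_mono (int_put h _)
          (((int_put h a).const_mul p).add ((int_put h b).const_mul q)) hpt
    _ = p * (∫ y, max (a - y) 0 ∂μ) + q * ∫ y, max (b - y) 0 ∂μ := by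
        rw [integral_add ((int_put h a).const_mul p) ((int_put h b).const_mul q),
          integral_const_mul, integral_const_mul]

lemma put_diff_le (h : Integrable (fun y => y) μ) {k1 k2 : ℝ} (hk : k1 ≤ k2) :
    (∫ y, max (k2 - y) 0 ∂μ) - (∫ y, max (k1 - y) 0 ∂μ)
      ≤ (μ (Set.Iic k2)).toReal * (k2 - k1) := by
  have hi := integral_indicator_const (μ := μ) (k2 - k1) measurableSet_Iic (s := Set.Iic k2)
  rw [smul_eq_mul, measureReal_def] at hi
  rw [← integral_sub (int_put h k2) (int_put h k1), ← hi]
  apply integral_mono ((int_put h k2).sub (int_put h k1))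
    ((integrable_const _).indicator measurableSet_Iic)
  intro y
  by_cases hy : y ∈ Set.Iic k2
  · rw [Set.indicator_of_mem hy]
    simp only [Set.mem_Iic] at hy
    have h2 : max (k2 - y) 0 = k2 - y := max_eq_left (by linarith)
    have h1 : k1 - y ≤ max (k1 - y) 0 := le_max_left _ _
    simp only [Pi.sub_apply]
    linarith
  · rw [Set.indicator_of_notMem hy]
    simp only [Set.mem_Iic, not_le] at hy
    have h2 : max (k2 - y) 0 = 0 := max_eq_right (by linarith)
    have h1 : (0:ℝ) ≤ max (k1 - y) 0 := le_max_right _ _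
    simp only [Pi.sub_apply]
    linarith

lemma put_diff_ge (h : Integrable (fun y => y) μ) {k1 k2 : ℝ} (hk : k1 ≤ k2) :
    (μ (Set.Iic k1)).toReal * (k2 - k1)
      ≤ (∫ y, max (k2 - y) 0 ∂μ) - (∫ y, max (k1 - y) 0 ∂μ) := by
  have hi := integral_indicator_const (μ := μ) (k2 - k1) measurableSet_Iic (s := Set.Iic k1)
  rw [smul_eq_mul, measureReal_def] at hi
  rw [← integral_sub (int_put h k2) (int_put h k1), ← hi]
  apply integral_mono ((integrable_const _).indicator measurableSet_Iic)
    ((int_put h k2).sub (int_put h k1))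
  intro y
  by_cases hy : y ∈ Set.Iic k1
  · rw [Set.indicator_of_mem hy]
    simp only [Set.mem_Iic] at hy
    have h2 : max (k2 - y) 0 = k2 - y := max_eq_left (by linarith)
    have h1 : max (k1 - y) 0 = k1 - y := max_eq_left (by linarith)
    simp only [Pi.sub_apply]
    linarith
  · rw [Set.indicator_of_notMem hy]
    have : max (k1 - y) 0 ≤ max (k2 - y) 0 := max_le_max (by linarith) le_rfl
    simp only [Pi.sub_apply]
    linarith

lemma toReal_le_one (s : Set ℝ) : (μ s).toReal ≤ 1 := by
  have := prob_le_one (μ := μ) (s := s)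
  simpa using ENNReal.toReal_mono ENNReal.one_ne_top this

lemma prob_split (k : ℝ) : (μ (Set.Iic k)).toReal + (μ (Set.Ioi k)).toReal = 1 := by
  have h1 : μ (Set.Iic k) + μ (Set.Ioi k) = 1 := by
    rw [← measure_union (Set.Iic_disjoint_Ioi le_rfl) measurableSet_Ioi,
      Set.Iic_union_Ioi, measure_univ]
  have h2 : (μ (Set.Iic k)) ≠ ⊤ := measure_ne_top _ _
  have h3 : (μ (Set.Ioi k)) ≠ ⊤ := measure_ne_top _ _
  rw [← ENNReal.toReal_add h2 h3, h1]
  simp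

lemma deriv_put_bounds (h : Integrable (fun y => y) μ) {f : ℝ → ℝ} {k : ℝ}
    (hf : ∀ k', f k' = ∫ y, max (k' - y) 0 ∂μ) (hd : DifferentiableAt ℝ f k) :
    (μ (Set.Iic k)).toReal ≤ deriv f k ∧ deriv f k ≤ 1 := by
  have hs := hasDerivAt_iff_tendsto_slope.1 hd.hasDerivAt
  have hright : Tendsto (slope f k) (𝓝[>] k) (𝓝 (deriv f k)) :=
    hs.mono_left (nhdsWithin_mono _ fun y hy => ne_of_gt hy)
  constructor
  · refine ge_of_tendsto hright ?_
    filter_upwards [self_mem_nhdsWithin] with y hy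
    have hy' : k < y := hy
    rw [slope_def_field, le_div_iff₀ (by linarith : (0:ℝ) < y - k), hf y, hf k]
    exact put_diff_ge h (le_of_lt hy')
  · refine le_of_tendsto hright ?_
    filter_upwards [self_mem_nhdsWithin] with y hy
    have hy' : k < y := hy
    rw [slope_def_field, div_le_one (by linarith : (0:ℝ) < y - k)]
    have h1 := put_diff_le h (le_of_lt hy')
    have h2 := toReal_le_one (μ := μ) (Set.Iic y)
    rw [hf y, hf k]
    nlinarith

end TwoPeriodAux

open TwoPeriodAux

/-- In the two-period case, the hedging cost function
`V₁(S₁) = 2w - ζ₀ S₁` for `0 ≤ S₁ ≤ w/ζ₀` and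
`V₁(S₁) = (ζ₀ - w/S₁) · P₁(w/(ζ₀ - w/S₁) | S₁)` for `S₁ > w/ζ₀`
is continuous at `S₁ = w/ζ₀` with both one-sided limits equal to `w`, and its
derivative has both one-sided limits at `w/ζ₀` equal to `-ζ₀`. -/
theorem two_period_V1_continuity
    (w ζ0 : ℝ) (hw : 0 < w) (hζ0 : 0 < ζ0)
    (κ : ℝ → Measure ℝ)            -- conditional law of `S₂` given `S₁ = s`
    (hκprob : ∀ s > 0, IsProbabilityMeasure (κ s))
    (hκpos : ∀ s > 0, (κ s) (Set.Iic 0) = 0)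
    (hint : ∀ s > 0, Integrable (fun y => y) (κ s))
    (hmart : ∀ s > 0, ∫ y, y ∂(κ s) = s)
    (P1 : ℝ → ℝ → ℝ)
    (hP1 : ∀ K s, 0 < s → P1 K s = ∫ y, max (K - y) 0 ∂(κ s))
    (hdiffS : ∀ K s, 0 < K → 0 < s → DifferentiableAt ℝ (fun x => P1 K x) s)
    (hdiffK : ∀ K s, 0 < K → 0 < s → DifferentiableAt ℝ (fun k => P1 k s) K)
    (hΔbdd : ∃ M, ∀ K s, 0 < K → 0 < s → |deriv (fun x => P1 K x) s| ≤ M)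
    (V1 : ℝ → ℝ)
    (hV1 : ∀ S1, V1 S1 =
      if S1 ≤ w / ζ0 then 2 * w - ζ0 * S1
      else (ζ0 - w / S1) * P1 (w / (ζ0 - w / S1)) S1) :
    (Tendsto V1 (nhdsWithin (w / ζ0) (Set.Iio (w / ζ0))) (nhds w)) ∧
    (Tendsto V1 (nhdsWithin (w / ζ0) (Set.Ioi (w / ζ0))) (nhds w)) ∧
    ContinuousAt V1 (w / ζ0) ∧
    (Tendsto (deriv V1) (nhdsWithin (w / ζ0) (Set.Iio (w / ζ0))) (nhds (-ζ0))) ∧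
    (Tendsto (deriv V1) (nhdsWithin (w / ζ0) (Set.Ioi (w / ζ0))) (nhds (-ζ0))) := by
  obtain ⟨M0, hM0⟩ := hΔbdd
  set M := max M0 0 with hMdef
  have hM : ∀ k s, 0 < k → 0 < s → |deriv (fun x => P1 k x) s| ≤ M :=
    fun k s hk hs => le_trans (hM0 k s hk hs) (le_max_left _ _)
  have hMnn : (0:ℝ) ≤ M := le_max_right _ _
  set s0 := w / ζ0 with hs0def
  have hs0 : 0 < s0 := div_pos hw hζ0
  have hws0 : w / s0 = ζ0 := by
    rw [hs0def]; field_simp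
  -- basic objects
  set z : ℝ → ℝ := fun s => ζ0 - w / s with hzdef
  set Kf : ℝ → ℝ := fun s => w / z s with hKfdef
  set C : ℝ → ℝ → ℝ := fun k s => ∫ y, max (y - k) 0 ∂(κ s) with hCdef
  have hzs0 : z s0 = 0 := by simp [hzdef, hws0]
  have hzpos : ∀ s, s0 < s → 0 < z s := by
    intro s hs
    have h1 : w / s < w / s0 := div_lt_div_of_pos_left hw hs0 hs
    rw [hws0] at h1
    simp [hzdef]; linarith
  have hKfpos : ∀ s, s0 < s → 0 < Kf s := fun s hs => div_pos hw (hzpos s hs)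
  have hzKf : ∀ s, s0 < s → z s * Kf s = w := by
    intro s hs
    rw [hKfdef]
    field_simp
    exact div_self (ne_of_gt (hzpos s hs))
  -- P1 representation with calls
  have hPrep : ∀ k s, 0 < s → P1 k s = k - s + C k s := by
    intro k s hs
    haveI := hκprob s hs
    rw [hP1 k s hs, put_call (hint s hs) k, hmart s hs, hCdef]
  -- Lipschitz in the spot variable
  have hLip : ∀ k s t, 0 < k → 0 < s → 0 < t → |P1 k s - P1 k t| ≤ M * |s - t| := by
    intro k s t hk hs ht
    have := Convex.norm_image_sub_le_of_norm_hasDerivWithin_le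
      (f := fun x => P1 k x) (f' := fun x => deriv (fun x => P1 k x) x)
      (s := Set.Ioi (0:ℝ)) (C := M)
      (fun x hx => ((hdiffS k x hk hx).hasDerivAt.hasDerivWithinAt))
      (fun x hx => by rw [Real.norm_eq_abs]; exact hM k x hk hx)
      (convex_Ioi 0) ht hs
    simpa [Real.norm_eq_abs] using this
  -- Lipschitz for calls
  have hClip : ∀ k s t, 0 < k → 0 < s → 0 < t → |C k s - C k t| ≤ (M+1) * |s - t| := by
    intro k s t hk hs ht
    have h1 : C k s - C k t = (P1 k s - P1 k t) + (s - t) := by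
      have e1 := hPrep k s hs
      have e2 := hPrep k t ht
      linarith
    rw [h1]
    calc |(P1 k s - P1 k t) + (s - t)| ≤ |P1 k s - P1 k t| + |s - t| := abs_add_le _ _
      _ ≤ M * |s - t| + |s - t| := by
          have := hLip k s t hk hs ht
          linarith
      _ = (M+1) * |s - t| := by ring
  -- nonnegativity of calls
  have hCnn : ∀ k s, 0 < s → 0 ≤ C k s := by
    intro k s hs
    haveI := hκprob s hs
    exact call_nonneg k
  -- tendsto facts
  have ztend : Tendsto z (𝓝[>] s0) (𝓝 0) := by
    have hc : ContinuousAt z s0 := by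
      apply ContinuousAt.sub continuousAt_const
      exact ContinuousAt.div continuousAt_const continuousAt_id (ne_of_gt hs0)
    rw [← hzs0]
    exact hc.continuousWithinAt.tendsto
  have KfTop : Tendsto Kf (𝓝[>] s0) atTop := by
    have hz2 : Tendsto z (𝓝[>] s0) (𝓝[>] 0) := by
      rw [tendsto_nhdsWithin_iff]
      refine ⟨ztend, ?_⟩
      filter_upwards [self_mem_nhdsWithin] with s hs
      exact hzpos s hs
    have hinv : Tendsto (fun s => (z s)⁻¹) (𝓝[>] s0) atTop := tendsto_inv_nhdsGT_zero.comp hz2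
    have : Tendsto (fun s => w * (z s)⁻¹) (𝓝[>] s0) atTop := hinv.const_mul_atTop hw
    apply this.congr
    intro s
    simp [hKfdef, div_eq_mul_inv]
  have idtend : Tendsto (fun s : ℝ => s) (𝓝[>] s0) (𝓝 s0) :=
    tendsto_id.mono_left nhdsWithin_le_nhds
  have C0tend : Tendsto (fun s => C (Kf s) s0) (𝓝[>] s0) (𝓝 0) := by
    haveI := hκprob s0 hs0
    exact (call_tendsto_zero (hint s0 hs0)).comp KfTop
  have C0tend2 : Tendsto (fun s => C (Kf s / 2) s0) (𝓝[>] s0) (𝓝 0) := by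
    haveI := hκprob s0 hs0
    exact (call_tendsto_zero (hint s0 hs0)).comp (KfTop.atTop_div_const (by norm_num))
  -- eventual representation of V1 on the right
  have hVright : ∀ s, s0 < s → V1 s = z s * P1 (Kf s) s := by
    intro s hs
    rw [hV1 s, if_neg (not_le.2 hs)]
  -- value at s0
  have hV1s0 : V1 s0 = w := by
    rw [hV1 s0, if_pos le_rfl]
    have : ζ0 * s0 = w := by rw [hs0def]; field_simp
    linarith
  -- call bound transfer to s0
  have hCs0 : ∀ k s, 0 < k → s0 < s → C k s ≤ C k s0 + (M+1) * (s - s0) := by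
    intro k s hk hs
    have h1 := hClip k s s0 hk (lt_trans hs0 hs) hs0
    have h2 : |s - s0| = s - s0 := abs_of_pos (by linarith)
    rw [h2] at h1
    have h3 := abs_le.1 h1
    linarith [h3.2]
  have hζs0 : ζ0 * s0 = w := by rw [hs0def]; field_simp
  -- linear part tendsto
  have linC : Tendsto (fun s : ℝ => 2*w - ζ0*s) (𝓝 s0) (𝓝 w) := by
    have h1 : Tendsto (fun s : ℝ => 2*w - ζ0*s) (𝓝 s0) (𝓝 (2*w - ζ0*s0)) :=
      (continuousAt_const.sub (continuousAt_const.mul continuousAt_id))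
    have h2 : 2*w - ζ0*s0 = w := by linarith
    rwa [h2] at h1
  have G1 : Tendsto V1 (𝓝[<] s0) (𝓝 w) := by
    apply Tendsto.congr' _ (linC.mono_left nhdsWithin_le_nhds)
    filter_upwards [self_mem_nhdsWithin] with s hs
    rw [hV1 s, if_pos (le_of_lt hs)]
  have Gle : Tendsto V1 (𝓝[≤] s0) (𝓝 w) := by
    apply Tendsto.congr' _ (linC.mono_left nhdsWithin_le_nhds)
    filter_upwards [self_mem_nhdsWithin] with s hs
    rw [hV1 s, if_pos (show s ≤ s0 from hs)]
  -- value representation on the right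
  have hVright2 : ∀ s, s0 < s → V1 s = w - z s * s + z s * C (Kf s) s := by
    intro s hs
    have h0 : 0 < s := lt_trans hs0 hs
    rw [hVright s hs, hPrep (Kf s) s h0]
    linear_combination (hzKf s hs)
  have lower_t : Tendsto (fun s => w - z s * s) (𝓝[>] s0) (𝓝 w) := by
    have h1 : Tendsto (fun s => z s * s) (𝓝[>] s0) (𝓝 0) := by
      have := ztend.mul idtend
      simpa using this
    have := (tendsto_const_nhds (x := w) (f := 𝓝[>] s0)).sub h1
    simpa using this
  have upper_t : Tendsto (fun s => w - z s * s + z s * (C (Kf s) s0 + (M+1)*(s - s0)))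
      (𝓝[>] s0) (𝓝 w) := by
    have hsub : Tendsto (fun s : ℝ => s - s0) (𝓝[>] s0) (𝓝 0) := by
      have := idtend.sub_const s0
      simpa using this
    have h2 : Tendsto (fun s => z s * (C (Kf s) s0 + (M+1)*(s - s0))) (𝓝[>] s0) (𝓝 0) := by
      have := ztend.mul (C0tend.add (hsub.const_mul (M+1)))
      simpa [mul_comm] using this
    have := lower_t.add h2
    simpa using this
  have G2 : Tendsto V1 (𝓝[>] s0) (𝓝 w) := by
    apply tendsto_of_tendsto_of_tendsto_of_le_of_le' lower_t upper_t
    · filter_upwards [self_mem_nhdsWithin] with s hs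
      rw [hVright2 s hs]
      have h0 : 0 < s := lt_trans hs0 hs
      nlinarith [hCnn (Kf s) s h0, hzpos s hs]
    · filter_upwards [self_mem_nhdsWithin] with s hs
      rw [hVright2 s hs]
      have h0 : 0 < s := lt_trans hs0 hs
      have h1 := hCs0 (Kf s) s (hKfpos s hs) hs
      nlinarith [hzpos s hs]
  have G3 : ContinuousAt V1 s0 := by
    show Tendsto V1 (𝓝 s0) (𝓝 (V1 s0))
    rw [hV1s0, ← nhdsLE_sup_nhdsGT s0]
    exact tendsto_sup.2 ⟨Gle, G2⟩
  have G4 : Tendsto (deriv V1) (𝓝[<] s0) (𝓝 (-ζ0)) := by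
    apply Tendsto.congr' _ (tendsto_const_nhds (x := -ζ0))
    filter_upwards [self_mem_nhdsWithin] with t ht
    have hev : ∀ᶠ s in 𝓝 t, V1 s = 2*w - ζ0*s := by
      filter_upwards [Iio_mem_nhds ht] with s hs
      rw [hV1 s, if_pos (le_of_lt hs)]
    have hL : HasDerivAt (fun s : ℝ => 2*w - ζ0*s) (-ζ0) t := by
      simpa using ((hasDerivAt_id t).const_mul ζ0).const_sub (2*w)
    have hV : HasDerivAt V1 (-ζ0) t := hL.congr_of_eventuallyEq hev
    exact hV.deriv.symm
  -- the key derivative computation on the right of s0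
  have HDER : ∀ t, s0 < t → ∃ d, HasDerivAt V1 d t ∧
      |d + ζ0| ≤ (w / t^2) * (3 * C (Kf t / 2) s0 + 3*(M+1)*(t - s0)) + (1+M) * z t := by
    intro t ht
    have ht0 : 0 < t := lt_trans hs0 ht
    haveI := hκprob t ht0
    have hzt : 0 < z t := hzpos t ht
    set k0 := Kf t with hk0def
    have hk0 : 0 < k0 := hKfpos t ht
    -- derivative of z
    have hz' : HasDerivAt z (w / t^2) t := by
      have h1 : HasDerivAt (fun s : ℝ => w / s) (-(w / t^2)) t := by
        have h2 := (hasDerivAt_inv (ne_of_gt ht0)).const_mul w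
        have h3 : w * -(t^2)⁻¹ = -(w / t^2) := by field_simp
        rw [h3] at h2
        apply h2.congr_of_eventuallyEq
        filter_upwards [] with s
        rw [div_eq_mul_inv]
      have := (hasDerivAt_const t ζ0).sub h1
      simpa [hzdef, Pi.sub_def] using this
    -- derivative of Kf
    set kd := (0 * z t - w * (w / t^2)) / (z t)^2 with hkddef
    have hKf' : HasDerivAt Kf kd t := (hasDerivAt_const t w).div hz' (ne_of_gt hzt)
    set Dk := deriv (fun k => P1 k t) k0 with hDkdef
    set Dx := deriv (fun x => P1 k0 x) t with hDxdef
    have hDk : HasDerivAt (fun k => P1 k t) Dk k0 := (hdiffK k0 t hk0 ht0).hasDerivAt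
    have hDx : HasDerivAt (fun x => P1 k0 x) Dx t := (hdiffS k0 t hk0 ht0).hasDerivAt
    -- the difference-quotient auxiliary function
    set q : ℝ → ℝ := fun s => if Kf s = k0 then Dk
      else (P1 (Kf s) s - P1 k0 s) / (Kf s - k0) with hqdef
    -- comparison of slopes at different spots
    have slope_cmp : ∀ b s, 0 < b → 0 < s → b ≠ k0 →
        |slope (fun k => P1 k s) k0 b - slope (fun k => P1 k t) k0 b|
          ≤ 2*M*|s - t|/|b - k0| := by
      intro b s hb hs hbne
      rw [slope_def_field, slope_def_field, div_sub_div_same, abs_div]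
      have hnum : |(P1 b s - P1 k0 s) - (P1 b t - P1 k0 t)| ≤ 2*M*|s-t| := by
        have e1 := hLip b s t hb hs ht0
        have e2 := hLip k0 s t hk0 hs ht0
        calc |(P1 b s - P1 k0 s) - (P1 b t - P1 k0 t)|
            = |(P1 b s - P1 b t) - (P1 k0 s - P1 k0 t)| := by ring_nf
          _ ≤ |P1 b s - P1 b t| + |P1 k0 s - P1 k0 t| := by
              rw [sub_eq_add_neg]
              exact (abs_add_le _ _).trans (by rw [abs_neg])
          _ ≤ 2*M*|s-t| := by linarith
      gcongr
    -- q tends to Dk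
    have hq : Tendsto q (𝓝[≠] t) (𝓝 Dk) := by
      rw [Metric.tendsto_nhds]
      intro ε hε
      have hslope := hasDerivAt_iff_tendsto_slope.1 hDk
      rw [Metric.tendsto_nhdsWithin_nhds] at hslope
      obtain ⟨δ1, hδ1, hδ1p⟩ := hslope (ε/4) (by linarith)
      set η := min (δ1/2) (k0/2) with hηdef
      have hη0 : 0 < η := lt_min (by linarith) (by linarith)
      have hηk : η < k0 := lt_of_le_of_lt (min_le_right _ _) (by linarith)
      have hηδ : η < δ1 := lt_of_le_of_lt (min_le_left _ _) (by linarith)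
      have hlo : |slope (fun k => P1 k t) k0 (k0 - η) - Dk| < ε/4 := by
        have := hδ1p (x := k0 - η) (by simp [sub_ne_zero]; linarith)
          (by rw [Real.dist_eq]; rw [show k0 - η - k0 = -η by ring, abs_neg, abs_of_pos hη0]; exact hηδ)
        rwa [Real.dist_eq] at this
      have hhi : |slope (fun k => P1 k t) k0 (k0 + η) - Dk| < ε/4 := by
        have := hδ1p (x := k0 + η) (by simp; linarith)
          (by rw [Real.dist_eq]; rw [show k0 + η - k0 = η by ring, abs_of_pos hη0]; exact hηδ)
        rwa [Real.dist_eq] at this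
      have hKcont : ContinuousAt Kf t := hKf'.differentiableAt.continuousAt
      have e1 : ∀ᶠ s in 𝓝 t, |Kf s - k0| < η := by
        have h5 := Metric.tendsto_nhds.1 hKcont η hη0
        simpa [Real.dist_eq] using h5
      have e2 : ∀ᶠ s in 𝓝 t, s0 < s := eventually_gt_nhds ht
      have e3 : ∀ᶠ s in 𝓝 t, |s - t| < ε*η/(8*M+8) := by
        have : (0:ℝ) < ε*η/(8*M+8) := by positivity
        exact eventually_abs_sub_lt t this
      filter_upwards [e1.filter_mono nhdsWithin_le_nhds, e2.filter_mono nhdsWithin_le_nhds,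
        e3.filter_mono nhdsWithin_le_nhds] with s h1 h2 h3
      rw [Real.dist_eq]
      by_cases hKs : Kf s = k0
      · rw [hqdef]
        simp only [if_pos hKs]
        simpa using hε
      · have hs0s : 0 < s := lt_trans hs0 h2
        have hcvx : ConvexOn ℝ Set.univ (fun k => P1 k s) := by
          have hfun : (fun k => P1 k s) = fun k => ∫ y, max (k - y) 0 ∂(κ s) :=
            funext fun k => hP1 k s hs0s
          rw [hfun]
          haveI := hκprob s hs0s
          exact convex_put (hint s hs0s)
        have hmono := hcvx.slope_mono (Set.mem_univ k0)
        have hqs : q s = slope (fun k => P1 k s) k0 (Kf s) := by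
          rw [hqdef]
          simp only [if_neg hKs]
          rw [slope_def_field]
        have mem1 : (k0 - η) ∈ Set.univ \ {k0} := ⟨trivial, by simp; linarith⟩
        have mem2 : (k0 + η) ∈ Set.univ \ {k0} := ⟨trivial, by simp; linarith⟩
        have mem3 : Kf s ∈ Set.univ \ {k0} := ⟨trivial, by simpa using hKs⟩
        have habs := abs_lt.1 h1
        have hlow : slope (fun k => P1 k s) k0 (k0 - η) ≤ q s := by
          rw [hqs]
          exact hmono mem1 mem3 (by linarith [habs.1])
        have hhigh : q s ≤ slope (fun k => P1 k s) k0 (k0 + η) := by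
          rw [hqs]
          exact hmono mem3 mem2 (by linarith [habs.2])
        have c1 := slope_cmp (k0 - η) s (by linarith) hs0s (ne_of_lt (by linarith))
        have c2 := slope_cmp (k0 + η) s (by linarith) hs0s (ne_of_gt (by linarith))
        rw [show k0 - η - k0 = -η by ring, abs_neg, abs_of_pos hη0] at c1
        rw [show k0 + η - k0 = η by ring, abs_of_pos hη0] at c2
        -- the common bound
        have hβ : 2*M*|s - t|/η ≤ ε/4 := by
          rw [div_le_iff₀ hη0]
          have h5 : 2*M*|s-t| ≤ 2*M*(ε*η/(8*M+8)) := by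
            apply mul_le_mul_of_nonneg_left (le_of_lt h3) (by positivity)
          have h6 : 2*M*(ε*η/(8*M+8)) ≤ ε/4*η := by
            rw [mul_div_assoc', div_le_iff₀ (by positivity : (0:ℝ) < 8*M+8)]
            nlinarith [mul_nonneg (le_of_lt hε) (le_of_lt hη0)]
          linarith
        have d1 := abs_le.1 c1
        have d2 := abs_le.1 c2
        have f1 := abs_lt.1 hlo
        have f2 := abs_lt.1 hhi
        rw [abs_lt]
        constructor
        · linarith [d1.1, f1.1]
        · linarith [d2.2, f2.2]
    -- the chain rule for s ↦ P1 (Kf s) s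
    have heq : ∀ s, s ≠ t → q s * slope Kf t s + slope (fun x => P1 k0 x) t s
        = slope (fun u => P1 (Kf u) u) t s := by
      intro s hs
      rw [slope_def_field, slope_def_field, slope_def_field, ← hk0def]
      by_cases hKs : Kf s = k0
      · rw [hqdef]
        simp only [if_pos hKs]
        rw [hKs]
        field_simp
        ring
      · rw [hqdef]
        simp only [if_neg hKs]
        have h1 : Kf s - k0 ≠ 0 := sub_ne_zero.2 hKs
        have h2 : s - t ≠ 0 := sub_ne_zero.2 hs
        field_simp
        ring
    have tend1 : Tendsto (fun s => q s * slope Kf t s + slope (fun x => P1 k0 x) t s)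
        (𝓝[≠] t) (𝓝 (Dk * kd + Dx)) :=
      (hq.mul (hasDerivAt_iff_tendsto_slope.1 hKf')).add (hasDerivAt_iff_tendsto_slope.1 hDx)
    have hcomp : HasDerivAt (fun u => P1 (Kf u) u) (Dk * kd + Dx) t := by
      rw [hasDerivAt_iff_tendsto_slope]
      apply tend1.congr'
      filter_upwards [self_mem_nhdsWithin] with s hs
      exact heq s hs
    -- derivative of V1 at t
    have hVev : V1 =ᶠ[𝓝 t] fun s => z s * P1 (Kf s) s := by
      filter_upwards [eventually_gt_nhds ht] with s hs
      exact hVright s hs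
    set d := (w / t^2) * P1 k0 t + z t * (Dk * kd + Dx) with hddef
    have hder : HasDerivAt V1 d t := by
      have := hz'.mul hcomp
      exact (this.congr_of_eventuallyEq hVev).congr_deriv (by rw [hddef, ← hk0def])
    refine ⟨d, hder, ?_⟩
    -- the quantitative bound
    have hDkb := deriv_put_bounds (μ := κ t) (hint t ht0) (f := fun k => P1 k t)
      (fun k' => hP1 k' t ht0) (hdiffK k0 t hk0 ht0)
    have hsplit := prob_split (μ := κ t) k0
    have htail : (κ t (Set.Ioi k0)).toReal * (k0/2) ≤ C (k0/2) t := by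
      have := call_ge_tail (μ := κ t) (hint t ht0) (le_of_lt hk0)
      simpa [hCdef] using this
    have hanti : C k0 t ≤ C (k0/2) t := by
      simp only [hCdef]
      exact call_anti (hint t ht0) (by linarith)
    have hDxb : |Dx| ≤ M := hM k0 t hk0 ht0
    -- E = C k0 t + k0 (1 - Dk)
    have hEnn : 0 ≤ C k0 t + k0 * (1 - Dk) := by
      have := hCnn k0 t ht0
      nlinarith [hDkb.2]
    have hEub : C k0 t + k0 * (1 - Dk) ≤ 3 * (C (k0/2) s0 + (M+1)*(t - s0)) := by
      have h1 : k0 * (1 - Dk) ≤ k0 * (κ t (Set.Ioi k0)).toReal := by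
        have h2 : 1 - Dk ≤ (κ t (Set.Ioi k0)).toReal := by linarith [hDkb.1]
        exact mul_le_mul_of_nonneg_left h2 (le_of_lt hk0)
      have h3 : k0 * (κ t (Set.Ioi k0)).toReal ≤ 2 * C (k0/2) t := by nlinarith [htail]
      have h4 := hCs0 (k0/2) t (by linarith) ht
      linarith
    -- algebraic identity
    have ht' : (t:ℝ) ≠ 0 := ne_of_gt ht0
    have hzne : z t ≠ 0 := ne_of_gt hzt
    have hk0w : k0 = w / z t := by rw [hk0def]
    have hkval : z t * kd = -((w/t^2) * k0) := by
      rw [hkddef, hk0w]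
      field_simp
      ring
    have hzt' : z t = ζ0 - w/t := by simp only [hzdef]
    have hid : d + ζ0 = (w/t^2) * (C k0 t + k0*(1 - Dk)) + z t + z t * Dx := by
      have h1 : P1 k0 t = k0 - t + C k0 t := hPrep k0 t ht0
      have e1 : d + ζ0 = (w/t^2)*(k0 - t + C k0 t) + Dk * (z t * kd) + z t * Dx + ζ0 := by
        rw [hddef, h1]; ring
      rw [e1, hkval, hzt']
      field_simp
      ring
    -- conclude the bound
    rw [hid]
    have hwt2 : (0:ℝ) < w/t^2 := by positivity
    have hb1 := mul_le_mul_of_nonneg_left hEub (le_of_lt hwt2)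
    have hb2 := mul_le_mul_of_nonneg_left hDxb (le_of_lt hzt)
    have hXnn : 0 ≤ (w/t^2) * (C k0 t + k0*(1 - Dk)) := mul_nonneg (le_of_lt hwt2) hEnn
    calc |(w/t^2) * (C k0 t + k0*(1 - Dk)) + z t + z t * Dx|
        ≤ |(w/t^2) * (C k0 t + k0*(1 - Dk)) + z t| + |z t * Dx| := abs_add_le _ _
      _ = ((w/t^2) * (C k0 t + k0*(1 - Dk)) + z t) + z t * |Dx| := by
          rw [abs_of_nonneg (add_nonneg hXnn (le_of_lt hzt)), abs_mul, abs_of_pos hzt]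
      _ ≤ (w/t^2)*(3*(C (k0/2) s0 + (M+1)*(t-s0))) + z t + z t * M :=
          add_le_add (add_le_add hb1 le_rfl) hb2
      _ = (w/t^2)*(3*C (k0/2) s0 + 3*(M+1)*(t-s0)) + (1+M) * z t := by ring
  -- the right limit of the derivative
  have G5 : Tendsto (deriv V1) (𝓝[>] s0) (𝓝 (-ζ0)) := by
    have hev : ∀ᶠ t in 𝓝[>] s0, |deriv V1 t + ζ0|
        ≤ (w / t^2) * (3 * C (Kf t / 2) s0 + 3*(M+1)*(t - s0)) + (1+M) * z t := by
      filter_upwards [self_mem_nhdsWithin] with t ht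
      obtain ⟨d, hd1, hd2⟩ := HDER t ht
      rwa [hd1.deriv]
    have hφ : Tendsto (fun t => (w / t^2) * (3 * C (Kf t / 2) s0 + 3*(M+1)*(t - s0))
        + (1+M) * z t) (𝓝[>] s0) (𝓝 0) := by
      have t1 : Tendsto (fun t : ℝ => w / t^2) (𝓝[>] s0) (𝓝 (w / s0^2)) := by
        apply Tendsto.mono_left _ nhdsWithin_le_nhds
        exact (continuousAt_const.div (continuousAt_id.pow 2) (pow_ne_zero 2 (ne_of_gt hs0)))
      have a2 : Tendsto (fun t : ℝ => t - s0) (𝓝[>] s0) (𝓝 0) := by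
        have := idtend.sub_const s0
        simpa using this
      have t2 : Tendsto (fun t => 3 * C (Kf t / 2) s0 + 3*(M+1)*(t - s0)) (𝓝[>] s0) (𝓝 0) := by
        have := (C0tend2.const_mul 3).add (a2.const_mul (3*(M+1)))
        simpa using this
      have := (t1.mul t2).add (ztend.const_mul (1+M))
      simpa using this
    have h0 : Tendsto (fun t => deriv V1 t + ζ0) (𝓝[>] s0) (𝓝 0) := by
      apply squeeze_zero_norm' _ hφ
      filter_upwards [hev] with t ht2
      simpa [Real.norm_eq_abs] using ht2
    have := h0.sub_const ζ0
    simpa using this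
  exact ⟨G1, G2, G3, G4, G5⟩
end
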